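/- If a homogeneous matrix *-algebra A contains an irreducible 0-1 matrix, then the all-ones matrix J belongs to A. -/

import Mathlib

open Matrix Polynomial
open scoped ComplexOrder

set_option linter.unnecessarySeqFocus false

lemma aeval_mulVec {n : ℕ} (M : Matrix (Fin n) (Fin n) ℝ) (v : Fin n → ℝ) (t : ℝ)
    (hv : M *ᵥ v = t • v) (p : ℝ[X]) :
    (aeval M p) *ᵥ v = p.eval t • v := by
  induction p using Polynomial.induction_on with
  | C a =>
      simp [Algebra.algebraMap_eq_smul_one, Matrix.smul_mulVec]
  | add p q hp hq =>
      simp [Matrix.add_mulVec, hp, hq, add_smul]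
  | monomial m a ih =>
      have h1 : (C a * X ^ (m + 1) : ℝ[X]) = (C a * X ^ m) * X := by ring
      rw [h1, _root_.map_mul, aeval_X, ← Matrix.mulVec_mulVec, hv, Matrix.mulVec_smul, ih,
        smul_smul]
      simp only [eval_mul, eval_X, eval_C, eval_pow]
      ring_nf

lemma perron_abs {n : ℕ} (R : Matrix (Fin n) (Fin n) ℝ) (hpos : ∀ i j, 0 < R i j)
    (r : ℝ) (hr : 0 < r) (hQ : (r • (1 : Matrix (Fin n) (Fin n) ℝ) - R).PosSemidef)
    (v : Fin n → ℝ) (hv : R *ᵥ v = r • v) :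
    R *ᵥ (fun k => |v k|) = r • (fun k => |v k|) ∧ (v ≠ 0 → ∀ k, 0 < |v k|) := by
  set a : Fin n → ℝ := fun k => |v k| with ha
  have haRa : v ⬝ᵥ (R *ᵥ v) ≤ a ⬝ᵥ (R *ᵥ a) := by
    simp only [dotProduct, mulVec, Finset.mul_sum]
    refine Finset.sum_le_sum fun k _ => Finset.sum_le_sum fun l _ => ?_
    have h1 : v k * (R k l * v l) ≤ |v k * (R k l * v l)| := le_abs_self _
    have h2 : |v k * (R k l * v l)| = a k * (R k l * a l) := by
      rw [abs_mul, abs_mul, abs_of_pos (hpos k l)]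
    linarith
  have hvv : v ⬝ᵥ v = a ⬝ᵥ a := by
    simp only [dotProduct, ha]
    exact Finset.sum_congr rfl fun k _ => (abs_mul_abs_self (v k)).symm
  have hvRv : v ⬝ᵥ (R *ᵥ v) = r * (a ⬝ᵥ a) := by
    rw [hv, dotProduct_smul, smul_eq_mul, hvv]
  have hd0 : star a ⬝ᵥ ((r • (1 : Matrix (Fin n) (Fin n) ℝ) - R) *ᵥ a) = 0 := by
    have hle : star a ⬝ᵥ ((r • (1 : Matrix (Fin n) (Fin n) ℝ) - R) *ᵥ a) ≤ 0 := by
      rw [star_trivial, Matrix.sub_mulVec, dotProduct_sub, Matrix.smul_mulVec,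
        Matrix.one_mulVec, dotProduct_smul, smul_eq_mul]
      linarith
    exact le_antisymm hle (hQ.dotProduct_mulVec_nonneg a)
  have hQa : (r • (1 : Matrix (Fin n) (Fin n) ℝ) - R) *ᵥ a = 0 :=
    (hQ.dotProduct_mulVec_zero_iff a).mp hd0
  have heig : R *ᵥ a = r • a := by
    have := hQa
    rw [Matrix.sub_mulVec, Matrix.smul_mulVec, Matrix.one_mulVec, sub_eq_zero] at this
    exact this.symm
  refine ⟨heig, fun hvne k => ?_⟩
  obtain ⟨k₀, hk₀⟩ : ∃ k₀, v k₀ ≠ 0 := Function.ne_iff.mp hvne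
  have hak₀ : 0 < a k₀ := abs_pos.mpr hk₀
  have hsum : R k k₀ * a k₀ ≤ ∑ l, R k l * a l := by
    refine Finset.single_le_sum (f := fun l => R k l * a l) (fun l _ => ?_) (Finset.mem_univ k₀)
    exact mul_nonneg (hpos k l).le (abs_nonneg _)
  have hra : r * a k = ∑ l, R k l * a l := by
    have := congrFun heig k
    simpa [mulVec, dotProduct] using this.symm
  have hpos' : 0 < r * a k := lt_of_lt_of_le (mul_pos (hpos k k₀) hak₀) (hra ▸ hsum)
  nlinarith [abs_nonneg (v k)]

lemma aeval_mem {n : ℕ} (A : Submodule ℂ (Matrix (Fin n) (Fin n) ℂ))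
    (hmul : ∀ M ∈ A, ∀ N ∈ A, M * N ∈ A)
    (T : Matrix (Fin n) (Fin n) ℂ) (hT : T ∈ A)
    (q : ℂ[X]) (hq : q.coeff 0 = 0) : aeval T q ∈ A := by
  have key : ∀ (d : ℕ) (p : ℂ[X]), p.natDegree ≤ d → aeval T (X * p) ∈ A := by
    intro d
    induction d with
    | zero =>
        intro p hp
        rw [Polynomial.eq_C_of_natDegree_le_zero hp, _root_.map_mul, aeval_X, aeval_C,
          Algebra.algebraMap_eq_smul_one]
        rw [show T * ((p.coeff 0) • 1) = (p.coeff 0) • T by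
          rw [Matrix.mul_smul, mul_one]]
        exact A.smul_mem _ hT
    | succ d ih =>
        intro p hp
        have hsplit : X * p = (p.coeff 0) • X + X * (X * p.divX) := by
          conv_lhs => rw [← Polynomial.X_mul_divX_add p]
          ring_nf
          rw [Polynomial.smul_eq_C_mul]
          ring
        rw [hsplit, map_add, _root_.map_smul, aeval_X, _root_.map_mul, aeval_X]
        refine A.add_mem (A.smul_mem _ hT) (hmul T hT _ (ih _ ?_))
        have := Polynomial.natDegree_divX_eq_natDegree_tsub_one (p := p)
        omega
  rw [show q = X * q.divX by
    conv_lhs => rw [← Polynomial.X_mul_divX_add q, hq, map_zero, add_zero]]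
  exact key q.divX.natDegree _ le_rfl

lemma perron_poly {n : ℕ} (hn : 0 < n) (R : Matrix (Fin n) (Fin n) ℝ)
    (hR : R.IsHermitian) (hpos : ∀ i j, 0 < R i j) :
    ∃ (w : Fin n → ℝ) (p : ℝ[X]), p.coeff 0 = 0 ∧ (∀ i, 0 < w i) ∧
      Polynomial.aeval R p = Matrix.of (fun i j => w i * w j) := by
  haveI : NeZero n := ⟨hn.ne'⟩
  set U : Matrix (Fin n) (Fin n) ℝ := (hR.eigenvectorUnitary : Matrix (Fin n) (Fin n) ℝ)
    with hUdef
  have hUU : U * star U = 1 := Matrix.mem_unitaryGroup_iff.mp hR.eigenvectorUnitary.2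
  have hU'U : star U * U = 1 := Matrix.mem_unitaryGroup_iff'.mp hR.eigenvectorUnitary.2
  set ev : Fin n → ℝ := hR.eigenvalues with hevdef
  have hspec : R = U * diagonal ev * star U := by
    have h := hR.spectral_theorem
    rwa [RCLike.ofReal_real_eq_id, Function.id_comp] at h
  have hRU : R * U = U * diagonal ev := by
    rw [hspec, mul_assoc, mul_assoc, hU'U, mul_one]
  set ucol : Fin n → Fin n → ℝ := fun j k => U k j with hucol
  have hcol : ∀ j, R *ᵥ ucol j = ev j • ucol j := by
    intro j; funext k
    have h1 : (R * U) k j = (U * diagonal ev) k j := by rw [hRU]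
    rw [Matrix.mul_apply, Matrix.mul_diagonal] at h1
    simp only [mulVec, dotProduct, Pi.smul_apply, smul_eq_mul, hucol]
    rw [h1, mul_comm]
  have hnorm : ∀ j, ucol j ⬝ᵥ ucol j = 1 := by
    intro j
    have h1 : (star U * U) j j = (1 : Matrix (Fin n) (Fin n) ℝ) j j := by rw [hU'U]
    rw [Matrix.mul_apply, Matrix.one_apply_eq] at h1
    simpa [dotProduct, Matrix.star_eq_conjTranspose, Matrix.conjTranspose_apply] using h1
  obtain ⟨i₀, -, hmax⟩ := Finset.exists_max_image Finset.univ ev ⟨⟨0, hn⟩, Finset.mem_univ _⟩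
  set r := ev i₀ with hrdef
  -- positive semidefiniteness of r•1 - R
  have hdiagQ : r • (1 : Matrix (Fin n) (Fin n) ℝ) - R
      = U * diagonal (fun i => r - ev i) * star U := by
    have h2 : diagonal (fun i => r - ev i)
        = r • (1 : Matrix (Fin n) (Fin n) ℝ) - diagonal ev := by
      ext i j
      by_cases h : i = j
      · subst h
        simp
      · simp [Matrix.diagonal_apply_ne _ h, Matrix.one_apply_ne h]
    rw [h2, Matrix.mul_sub, Matrix.sub_mul, ← hspec]
    congr 1
    rw [Matrix.mul_smul, mul_one, Matrix.smul_mul, hUU]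
  have hQ : (r • (1 : Matrix (Fin n) (Fin n) ℝ) - R).PosSemidef := by
    rw [hdiagQ, Matrix.star_eq_conjTranspose]
    exact (Matrix.posSemidef_diagonal_iff.mpr fun i =>
      sub_nonneg.mpr (hmax i (Finset.mem_univ i))).mul_mul_conjTranspose_same U
  have hrpos : 0 < r := by
    have h1 := hQ.dotProduct_mulVec_nonneg (Pi.single i₀ 1)
    have h2 : star (Pi.single i₀ 1) ⬝ᵥ ((r • (1 : Matrix (Fin n) (Fin n) ℝ) - R)
        *ᵥ Pi.single i₀ 1) = r - R i₀ i₀ := by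
      simp [dotProduct, mulVec, Pi.single_apply, Matrix.sub_apply, Matrix.smul_apply,
        Matrix.one_apply, Finset.sum_ite_eq', _root_.sub_apply]
    rw [h2] at h1
    linarith [hpos i₀ i₀]
  -- the Perron vector
  have hvne : ucol i₀ ≠ 0 := by
    intro h
    have := hnorm i₀
    rw [h] at this
    simp [dotProduct] at this
  obtain ⟨heigw, hwpos'⟩ := perron_abs R hpos r hrpos hQ (ucol i₀) (hcol i₀)
  set w : Fin n → ℝ := fun k => |ucol i₀ k| with hwdef
  have hwpos : ∀ k, 0 < w k := hwpos' hvne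
  have hwnorm : w ⬝ᵥ w = 1 := by
    rw [← hnorm i₀]
    simp only [dotProduct, hwdef]
    exact Finset.sum_congr rfl fun k _ => abs_mul_abs_self _
  -- transpose symmetry
  have hRT : Rᵀ = R := by
    have := hR
    rwa [Matrix.IsHermitian, Matrix.conjTranspose_eq_transpose_of_trivial] at this
  have hsymdot : ∀ x z : Fin n → ℝ, (R *ᵥ x) ⬝ᵥ z = x ⬝ᵥ (R *ᵥ z) := by
    intro x z
    rw [Matrix.dotProduct_mulVec]
    congr 1
    rw [← Matrix.vecMul_transpose, hRT]
  have horth : ∀ (x z : Fin n → ℝ) (s t : ℝ), R *ᵥ x = s • x → R *ᵥ z = t • z →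
      s ≠ t → x ⬝ᵥ z = 0 := by
    intro x z s t hx hz hst
    have h1 : s * (x ⬝ᵥ z) = t * (x ⬝ᵥ z) := by
      calc s * (x ⬝ᵥ z) = (s • x) ⬝ᵥ z := by rw [smul_dotProduct]; rfl
        _ = (R *ᵥ x) ⬝ᵥ z := by rw [hx]
        _ = x ⬝ᵥ (R *ᵥ z) := hsymdot x z
        _ = x ⬝ᵥ (t • z) := by rw [hz]
        _ = t * (x ⬝ᵥ z) := by rw [dotProduct_smul]; rfl
    by_contra h
    exact hst (mul_right_cancel₀ h h1)
  -- simplicity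
  have hsimp : ∀ z : Fin n → ℝ, R *ᵥ z = r • z → w ⬝ᵥ z = 0 → z = 0 := by
    intro z hz hwz
    by_contra hzne
    obtain ⟨hza, hzpos⟩ := perron_abs R hpos r hrpos hQ z hz
    have hzk : ∀ k, 0 < |z k| := hzpos hzne
    have hzknz : ∀ k, z k ≠ 0 := fun k => abs_pos.mp (hzk k)
    have hex_pos : ∃ k, 0 < z k := by
      by_contra h
      push_neg at h
      have hneg : ∀ k, z k < 0 := fun k => lt_of_le_of_ne (h k) (hzknz k)
      have : w ⬝ᵥ z < 0 := by
        apply Finset.sum_neg (fun k _ => mul_neg_of_pos_of_neg (hwpos k) (hneg k))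
        exact Finset.univ_nonempty
      rw [hwz] at this
      exact lt_irrefl 0 this
    have hex_neg : ∃ k, z k < 0 := by
      by_contra h
      push_neg at h
      have hposz : ∀ k, 0 < z k := fun k => lt_of_le_of_ne (h k) (Ne.symm (hzknz k))
      have : 0 < w ⬝ᵥ z := by
        apply Finset.sum_pos (fun k _ => mul_pos (hwpos k) (hposz k))
        exact Finset.univ_nonempty
      rw [hwz] at this
      exact lt_irrefl 0 this
    obtain ⟨kp, hkp⟩ := hex_pos
    obtain ⟨km, hkm⟩ := hex_neg
    have e1 : ∑ l, R kp l * |z l| = r * |z kp| := by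
      have := congrFun hza kp
      simpa [mulVec, dotProduct] using this
    have e2 : ∑ l, R kp l * z l = r * z kp := by
      have := congrFun hz kp
      simpa [mulVec, dotProduct] using this
    have h1 : ∑ l, R kp l * (|z l| - z l) = 0 := by
      have : ∑ l, R kp l * (|z l| - z l) = (∑ l, R kp l * |z l|) - ∑ l, R kp l * z l := by
        rw [← Finset.sum_sub_distrib]
        exact Finset.sum_congr rfl fun l _ => by ring
      rw [this, e1, e2, abs_of_pos hkp, sub_self]
    have h2 := (Finset.sum_eq_zero_iff_of_nonneg (fun l _ =>
      mul_nonneg (hpos kp l).le (sub_nonneg.mpr (le_abs_self _)))).mp h1 km (Finset.mem_univ km)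
    have h3 : |z km| = z km := by
      have := mul_eq_zero.mp h2
      rcases this with h | h
      · exact absurd h (hpos kp km).ne'
      · linarith [sub_eq_zero.mp h]
    linarith [abs_nonneg (z km)]
  -- the polynomial
  set sp : Finset ℝ := (Finset.image ev Finset.univ).erase r with hspdef
  set c : ℝ := r * ∏ μ ∈ sp, (r - μ) with hcdef
  have hc : c ≠ 0 := by
    apply mul_ne_zero hrpos.ne'
    exact Finset.prod_ne_zero_iff.mpr fun μ hμ =>
      sub_ne_zero.mpr (Ne.symm (Finset.ne_of_mem_erase hμ))
  set p₀ : ℝ[X] := X * ∏ μ ∈ sp, (X - C μ) with hp₀def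
  have hval : ∀ j, p₀.eval (ev j) = if ev j = r then c else 0 := by
    intro j
    rw [hp₀def, eval_mul, eval_X, Polynomial.eval_prod]
    simp only [eval_sub, eval_X, eval_C]
    split
    · next h => rw [h, hcdef]
    · next h =>
      have hmem : ev j ∈ sp := Finset.mem_erase.mpr
        ⟨h, Finset.mem_image_of_mem ev (Finset.mem_univ j)⟩
      rw [Finset.prod_eq_zero hmem (sub_self _), mul_zero]
  set E : Matrix (Fin n) (Fin n) ℝ := Matrix.of (fun i j => w i * w j) with hEdef
  have hEmv : ∀ x : Fin n → ℝ, E *ᵥ x = (w ⬝ᵥ x) • w := by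
    intro x
    funext i
    simp only [mulVec, dotProduct, hEdef, Matrix.of_apply, Pi.smul_apply, smul_eq_mul]
    rw [Finset.sum_mul]
    exact Finset.sum_congr rfl fun l _ => by ring
  have hkey : aeval R p₀ = c • E := by
    have hMU : (aeval R p₀) * U = (c • E) * U := by
      ext i j
      have hgen : ∀ M : Matrix (Fin n) (Fin n) ℝ, (M * U) i j = (M *ᵥ ucol j) i := by
        intro M
        simp [Matrix.mul_apply, mulVec, dotProduct, hucol]
      rw [hgen, hgen, aeval_mulVec R (ucol j) (ev j) (hcol j) p₀, hval j]
      have hsm : ((c • E) *ᵥ ucol j) = c • (E *ᵥ ucol j) := by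
        rw [Matrix.smul_mulVec]
      by_cases hj : ev j = r
      · have hz : ucol j = (w ⬝ᵥ ucol j) • w := by
          have h0 : R *ᵥ (ucol j - (w ⬝ᵥ ucol j) • w) = r • (ucol j - (w ⬝ᵥ ucol j) • w) := by
            rw [Matrix.mulVec_sub, Matrix.mulVec_smul, heigw, hcol j, hj, smul_sub, smul_comm]
          have h1 : w ⬝ᵥ (ucol j - (w ⬝ᵥ ucol j) • w) = 0 := by
            rw [dotProduct_sub, dotProduct_smul, hwnorm, smul_eq_mul, mul_one, sub_self]
          have := hsimp _ h0 h1
          rw [sub_eq_zero] at this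
          exact this
        rw [if_pos hj, hsm, hEmv]
        conv_lhs => rw [hz]
      · have hworth : w ⬝ᵥ ucol j = 0 :=
          horth w (ucol j) r (ev j) heigw (hcol j) (Ne.symm hj)
        rw [if_neg hj, hsm, hEmv, hworth]
        simp
    have h2 := congrArg (fun M => M * star U) hMU
    simpa only [mul_assoc, hUU, mul_one] using h2
  refine ⟨w, Polynomial.C c⁻¹ * p₀, ?_, hwpos, ?_⟩
  · rw [Polynomial.mul_coeff_zero, hp₀def, Polynomial.mul_coeff_zero, Polynomial.coeff_X_zero]
    ring
  · rw [_root_.map_mul, aeval_C, hkey, Algebra.algebraMap_eq_smul_one, smul_mul_assoc,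
      one_mul, smul_smul, inv_mul_cancel₀ hc, one_smul]

/-- If a homogeneous matrix *-algebra contains an irreducible 0-1 matrix,
then the all-ones matrix J belongs to it. -/
theorem all_ones_mem_of_irreducible {n : ℕ}
    (A : Submodule ℂ (Matrix (Fin n) (Fin n) ℂ))
    (hmul : ∀ M ∈ A, ∀ N ∈ A, M * N ∈ A)
    (hstar : ∀ M ∈ A, Mᴴ ∈ A)
    (hhom : ∀ M ∈ A, ∀ i j : Fin n, M i i = M j j)
    (B : Matrix (Fin n) (Fin n) ℂ)
    (hB : B ∈ A)
    (h01 : ∀ i j, B i j = 0 ∨ B i j = 1)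
    -- irreducibility: the directed graph of B is strongly connected
    (hirr : ∀ i j : Fin n, ∃ k : ℕ, 0 < k ∧ (B ^ k) i j ≠ 0) :
    (Matrix.of fun _ _ => (1 : ℂ) : Matrix (Fin n) (Fin n) ℂ) ∈ A := by
  rcases Nat.eq_zero_or_pos n with h0 | hn
  · subst h0
    have hz : (Matrix.of fun _ _ => (1 : ℂ) : Matrix (Fin 0) (Fin 0) ℂ) = 0 := by
      ext i
      exact i.elim0
    rw [hz]
    exact A.zero_mem
  -- powers of B
  have hpow : ∀ k : ℕ, 0 < k → B ^ k ∈ A := by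
    intro k hk
    induction k with
    | zero => omega
    | succ m ih =>
      rcases Nat.eq_zero_or_pos m with hm | hm
      · subst hm; simpa using hB
      · rw [pow_succ]; exact hmul _ (ih hm) _ hB
  have hBnn : ∀ i j, 0 ≤ B i j := by
    intro i j
    rcases h01 i j with h | h <;> rw [h] <;>
      first
      | exact le_rfl
      | exact zero_le_one
  have hknn : ∀ (k : ℕ) i j, 0 ≤ (B ^ k) i j := by
    intro k
    induction k with
    | zero =>
      intro i j
      rw [pow_zero]
      rw [Matrix.one_apply]
      split_ifs
      · exact zero_le_one
      · exact le_refl (0 : ℂ)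
    | succ m ih =>
      intro i j
      rw [pow_succ, Matrix.mul_apply]
      exact Finset.sum_nonneg fun l _ => mul_nonneg (ih i l) (hBnn l j)
  -- the positive combination S
  have hirr' : ∀ p : Fin n × Fin n, ∃ k, 0 < k ∧ (B ^ k) p.1 p.2 ≠ 0 :=
    fun p => hirr p.1 p.2
  choose kf hkf using hirr'
  set S : Matrix (Fin n) (Fin n) ℂ := ∑ p : Fin n × Fin n, B ^ (kf p) with hSdef
  have hSmem : S ∈ A := Submodule.sum_mem A fun p _ => hpow _ (hkf p).1
  have hSpos : ∀ i j, 0 < S i j := by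
    intro i j
    rw [hSdef, Matrix.sum_apply]
    refine Finset.sum_pos' (fun p _ => hknn _ _ _) ⟨(i, j), Finset.mem_univ _, ?_⟩
    exact lt_of_le_of_ne (hknn _ _ _) (Ne.symm (hkf (i, j)).2)
  have hSre : ∀ i j, 0 < (S i j).re ∧ (S i j).im = 0 := by
    intro i j
    have := hSpos i j
    rw [Complex.lt_def] at this
    exact ⟨by simpa using this.1, by simpa using this.2.symm⟩
  -- the real matrix
  set Rmat : Matrix (Fin n) (Fin n) ℝ := Matrix.of fun i j => (S i j).re + (S j i).re
    with hRdef
  have hRpos : ∀ i j, 0 < Rmat i j := fun i j =>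
    add_pos (hSre i j).1 (hSre j i).1
  have hRsym : Rmat.IsHermitian := by
    rw [Matrix.IsHermitian]
    ext i j
    simp only [Matrix.conjTranspose_apply, hRdef, Matrix.of_apply, star_trivial]
    ring
  have hmap : Rmat.map Complex.ofReal = S + Sᴴ := by
    ext i j
    simp only [Matrix.map_apply, hRdef, Matrix.of_apply, Matrix.add_apply,
      Matrix.conjTranspose_apply]
    apply Complex.ext
    · simp [(hSre i j).2, (hSre j i).2]
    · simp [(hSre i j).2, (hSre j i).2]
  obtain ⟨w, p, hp0, hwpos, haev⟩ := perron_poly hn Rmat hRsym hRpos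
  have hTmem : S + Sᴴ ∈ A := A.add_mem hSmem (hstar S hSmem)
  set q : ℂ[X] := p.map Complex.ofRealHom with hqdef
  have hq0 : q.coeff 0 = 0 := by rw [hqdef, Polynomial.coeff_map, hp0, map_zero]
  have hEA : aeval (S + Sᴴ) q ∈ A := aeval_mem A hmul _ hTmem q hq0
  -- compute aeval (S+Sᴴ) q
  have hcomm : aeval (S + Sᴴ) q = (aeval Rmat p).map Complex.ofReal := by
    rw [← hmap]
    set φ : Matrix (Fin n) (Fin n) ℝ →+* Matrix (Fin n) (Fin n) ℂ :=
      (Complex.ofRealHom).mapMatrix with hφ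
    have hφap : ∀ M : Matrix (Fin n) (Fin n) ℝ, φ M = M.map Complex.ofReal := by
      intro M
      rfl
    have hcomp : φ.comp (algebraMap ℝ (Matrix (Fin n) (Fin n) ℝ))
        = (algebraMap ℂ (Matrix (Fin n) (Fin n) ℂ)).comp Complex.ofRealHom := by
      apply RingHom.ext
      intro a
      ext i j
      simp only [RingHom.comp_apply, hφap, Matrix.map_apply,
        Matrix.algebraMap_matrix_apply, apply_ite Complex.ofReal, map_zero]
      rfl
    rw [← hφap, Polynomial.aeval_def, Polynomial.aeval_def, hqdef,
      Polynomial.eval₂_map, ← hcomp, ← Polynomial.hom_eval₂]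
    exact hφap _
  -- final assembly
  have hEval : aeval (S + Sᴴ) q = Matrix.of fun i j => ((w i * w j : ℝ) : ℂ) := by
    rw [hcomm, haev]
    ext i j
    simp [Matrix.map_apply]
  have hdiag := hhom _ hEA
  set i0 : Fin n := ⟨0, hn⟩ with hi0
  have hww : ∀ i, w i = w i0 := by
    intro i
    have h1 := hdiag i i0
    rw [hEval] at h1
    simp only [Matrix.of_apply] at h1
    have h2 : w i * w i = w i0 * w i0 := by exact_mod_cast h1
    nlinarith [hwpos i, hwpos i0]
  have hfin : (Matrix.of fun _ _ => (1 : ℂ) : Matrix (Fin n) (Fin n) ℂ)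
      = ((w i0 * w i0 : ℝ) : ℂ)⁻¹ • aeval (S + Sᴴ) q := by
    rw [hEval]
    ext i j
    simp only [Matrix.of_apply, Matrix.smul_apply, smul_eq_mul, hww i, hww j]
    rw [inv_mul_cancel₀]
    exact_mod_cast (mul_pos (hwpos i0) (hwpos i0)).ne'
  rw [hfin]
  exact A.smul_mem _ hEA
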